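/- arXiv:math/0508305 — 4 statements merged into one kernel-verified Lean document; each statement's English description precedes it below -/
import Mathlib

section
/- Let F(n) be the free group on generators g_1,…,g_n with n ≥ 2, let H = ⟨g_1⟩, and let S_0 ⊆ F(n) be the set of reduced words of the form g_1^m w g_1^k where w is nonempty, starts with a nonzero power of some g_j with j ≥ 2, does not start or end with a power of g_1, and |m| ≤ 2N_0 − 1 (for a fixed N_0 ≥ 1). Then the sets g_1^{4N_0 k} S_0 g_1^{-4N_0 k}, for k ranging over ℤ, are pairwise disjoint subsets of F(n). -/
def startsWithGen {n : ℕ} (j : Fin n) (w : FreeGroup (Fin n)) : Prop :=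
  ∃ b : Bool, w.toWord.head? = some (j, b)

def endsWithGen {n : ℕ} (j : Fin n) (w : FreeGroup (Fin n)) : Prop :=
  ∃ b : Bool, w.toWord.getLast? = some (j, b)

section Aux

open FreeGroup List

variable {α : Type*} [DecidableEq α]

/-- relation: no cancellation between adjacent letters -/
abbrev NC (a b : α × Bool) : Prop := a.1 ≠ b.1 ∨ a.2 ≠ !b.2

lemma reduce_eq_self_of_chain {L : List (α × Bool)}
    (h : List.Chain' NC L) : FreeGroup.reduce L = L := by
  induction L with
  | nil => rfl
  | cons x t ih =>
    rw [FreeGroup.reduce.cons, ih h.tail]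
    cases t with
    | nil => rfl
    | cons hd tl =>
      have hr : NC x hd := List.isChain_cons_cons.mp h |>.1
      simp only []
      rw [if_neg]
      intro ⟨h1, h2⟩
      rcases hr with h | h <;> exact h (by simpa using ‹_›)

lemma chain'_toWord (x : FreeGroup α) : List.Chain' NC x.toWord := by
  rw [← FreeGroup.reduce_toWord]
  generalize x.toWord = L
  induction L with
  | nil => exact List.isChain_nil
  | cons a t ih =>
    rw [FreeGroup.reduce.cons]
    cases h : FreeGroup.reduce t with
    | nil => exact List.isChain_singleton _
    | cons hd tl =>
      rw [h] at ih
      by_cases hc : a.1 = hd.1 ∧ a.2 = !hd.2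
      · simpa [hc, List.Chain'] using ih.tail
      · simp only []
        rw [if_neg hc]
        exact List.isChain_cons_cons.mpr ⟨not_and_or.mp hc, ih⟩

/-- the reduced word for `of a ^ p` -/
def zword (a : α) (p : ℤ) : List (α × Bool) := List.replicate p.natAbs (a, decide (0 < p))

lemma toWord_zpow (a : α) (p : ℤ) : (FreeGroup.of a ^ p).toWord = zword a p := by
  rcases lt_trichotomy p 0 with h | h | h
  · have : FreeGroup.of a ^ p = (FreeGroup.of a ^ ((-p).toNat))⁻¹ := by
      rw [← zpow_natCast, ← zpow_neg]; congr 1; omega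
    rw [this, FreeGroup.toWord_inv, FreeGroup.toWord_of_pow, FreeGroup.invRev, zword,
      List.map_replicate, List.reverse_replicate]
    congr 1
    · omega
    · simp [not_lt_of_gt h]
  · simp [h, zword]
  · have : FreeGroup.of a ^ p = FreeGroup.of a ^ (p.toNat) := by
      rw [← zpow_natCast]; congr 1; omega
    rw [this, FreeGroup.toWord_of_pow, zword]
    congr 1
    · omega
    · simp [h]

lemma mem_getLast?_replicate {k : ℕ} {y x : α × Bool}
    (hx : x ∈ (List.replicate k y).getLast?) : x = y := by
  obtain ⟨h, rfl⟩ := List.mem_getLast?_eq_getLast hx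
  exact List.eq_of_mem_replicate (List.getLast_mem h)

lemma mem_head?_replicate {k : ℕ} {y x : α × Bool}
    (hx : x ∈ (List.replicate k y).head?) : x = y := by
  have := List.eq_cons_of_mem_head? hx
  exact List.eq_of_mem_replicate (by rw [this]; exact List.mem_cons_self)

lemma toWord_sandwich (a : α) (p q : ℤ) (w : FreeGroup α)
    (hw : w.toWord ≠ [])
    (h1 : ∀ x ∈ w.toWord.head?, x.1 ≠ a)
    (h2 : ∀ x ∈ w.toWord.getLast?, x.1 ≠ a) :
    (FreeGroup.of a ^ p * w * FreeGroup.of a ^ q).toWord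
      = zword a p ++ w.toWord ++ zword a q := by
  have hzp : FreeGroup.mk (zword a p) = FreeGroup.of a ^ p := by
    rw [← toWord_zpow]; exact FreeGroup.mk_toWord
  have hzq : FreeGroup.mk (zword a q) = FreeGroup.of a ^ q := by
    rw [← toWord_zpow]; exact FreeGroup.mk_toWord
  have key : FreeGroup.of a ^ p * w * FreeGroup.of a ^ q
      = FreeGroup.mk (zword a p) * FreeGroup.mk w.toWord * FreeGroup.mk (zword a q) := by
    rw [hzp, hzq, FreeGroup.mk_toWord]
  rw [key, FreeGroup.mul_mk, FreeGroup.mul_mk, FreeGroup.toWord_mk]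
  apply reduce_eq_self_of_chain
  show List.IsChain NC _
  rw [List.append_assoc, List.isChain_append]
  refine ⟨List.isChain_replicate_of_rel _ (by simp [NC]), ?_, ?_⟩
  · rw [List.isChain_append]
    refine ⟨chain'_toWord w, List.isChain_replicate_of_rel _ (by simp [NC]), ?_⟩
    intro x hx y hy
    exact Or.inl (by rw [mem_head?_replicate hy]; exact h2 x hx)
  · intro x hx y hy
    rw [List.head?_append_of_ne_nil _ hw] at hy
    rw [mem_getLast?_replicate hx]
    exact Or.inl (fun hh => h1 y hy hh.symm)

lemma takeWhile_rep_append (a : α) (b : Bool) (k : ℕ) (L : List (α × Bool))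
    (h1 : ∀ x ∈ L.head?, x.1 ≠ a) :
    (List.replicate k (a, b) ++ L).takeWhile (fun x => x.1 = a) = List.replicate k (a, b) := by
  induction k with
  | zero =>
    cases L with
    | nil => simp
    | cons c T =>
      simp only [List.replicate, List.nil_append]
      rw [List.takeWhile_cons_of_neg]
      simpa using h1 c rfl
  | succ k ih =>
    rw [List.replicate_succ, List.cons_append, List.takeWhile_cons_of_pos (by simp), ih]

lemma takeWhile_sandwich (a : α) (p q : ℤ) (W : List (α × Bool))
    (hW : W ≠ []) (h1 : ∀ x ∈ W.head?, x.1 ≠ a) :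
    (zword a p ++ W ++ zword a q).takeWhile (fun x => x.1 = a) = zword a p := by
  rw [List.append_assoc, zword, takeWhile_rep_append]
  intro x hx
  rw [List.head?_append_of_ne_nil _ hW] at hx
  exact h1 x hx

lemma zword_inj (a : α) {p q : ℤ} (h : zword a p = zword a q) : p = q := by
  have hl : p.natAbs = q.natAbs := by
    have := congrArg List.length h
    simpa [zword] using this
  rcases Nat.eq_zero_or_pos p.natAbs with h0 | h0
  · omega
  · have hb : (0 < p) ↔ (0 < q) := by
      have := congrArg List.head? h
      simp [zword, List.head?_replicate, h0.ne', (hl ▸ h0).ne'] at this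
      exact this
    rcases lt_or_ge 0 p with hp | hp
    · have := hb.1 hp; omega
    · have : ¬ 0 < q := fun hq => absurd (hb.2 hq) (by omega)
      omega

lemma exp_eq (a : α) {p q p' q' : ℤ} {w w' : FreeGroup α}
    (hw : w ≠ 1) (hw' : w' ≠ 1)
    (h1 : ∀ x ∈ w.toWord.head?, x.1 ≠ a) (h2 : ∀ x ∈ w.toWord.getLast?, x.1 ≠ a)
    (h1' : ∀ x ∈ w'.toWord.head?, x.1 ≠ a) (h2' : ∀ x ∈ w'.toWord.getLast?, x.1 ≠ a)
    (heq : FreeGroup.of a ^ p * w * FreeGroup.of a ^ q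
         = FreeGroup.of a ^ p' * w' * FreeGroup.of a ^ q') : p = p' := by
  have hWn : w.toWord ≠ [] := fun hh => hw (FreeGroup.toWord_eq_nil_iff.mp hh)
  have hWn' : w'.toWord ≠ [] := fun hh => hw' (FreeGroup.toWord_eq_nil_iff.mp hh)
  have ht := congrArg FreeGroup.toWord heq
  rw [toWord_sandwich a p q w hWn h1 h2, toWord_sandwich a p' q' w' hWn' h1' h2'] at ht
  have h2 := congrArg (List.takeWhile (fun x => x.1 = a)) ht
  rw [takeWhile_sandwich a p q _ hWn h1, takeWhile_sandwich a p' q' _ hWn' h1'] at h2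
  exact zword_inj a h2

end Aux

/-- in F(n), n ≥ 2, with S₀ the set of reduced words g₁^m w g₁^k
where w is nonempty, starts with a nonzero power of some g_j (j ≥ 2), neither
starts nor ends with a power of g₁, and |m| ≤ 2N₀ - 1, the conjugate sets
g₁^{4N₀k} S₀ g₁^{-4N₀k}, k ∈ ℤ, are pairwise disjoint. -/
theorem stmt_1 (n : ℕ) (hn : 2 ≤ n) (N0 : ℕ) (hN0 : 1 ≤ N0) :
    ∀ k1 k2 : ℤ, k1 ≠ k2 →
      Disjoint
        ((fun x => (FreeGroup.of (⟨0, by omega⟩ : Fin n)) ^ (4 * (N0 : ℤ) * k1) * x *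
            (FreeGroup.of (⟨0, by omega⟩ : Fin n)) ^ (-(4 * (N0 : ℤ) * k1))) ''
          {x : FreeGroup (Fin n) | ∃ (m k : ℤ) (w : FreeGroup (Fin n)),
            x = (FreeGroup.of (⟨0, by omega⟩ : Fin n)) ^ m * w *
                (FreeGroup.of (⟨0, by omega⟩ : Fin n)) ^ k ∧
            w ≠ 1 ∧ ¬ startsWithGen (⟨0, by omega⟩ : Fin n) w ∧
            ¬ endsWithGen (⟨0, by omega⟩ : Fin n) w ∧ |m| ≤ 2 * (N0 : ℤ) - 1})
        ((fun x => (FreeGroup.of (⟨0, by omega⟩ : Fin n)) ^ (4 * (N0 : ℤ) * k2) * x *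
            (FreeGroup.of (⟨0, by omega⟩ : Fin n)) ^ (-(4 * (N0 : ℤ) * k2))) ''
          {x : FreeGroup (Fin n) | ∃ (m k : ℤ) (w : FreeGroup (Fin n)),
            x = (FreeGroup.of (⟨0, by omega⟩ : Fin n)) ^ m * w *
                (FreeGroup.of (⟨0, by omega⟩ : Fin n)) ^ k ∧
            w ≠ 1 ∧ ¬ startsWithGen (⟨0, by omega⟩ : Fin n) w ∧
            ¬ endsWithGen (⟨0, by omega⟩ : Fin n) w ∧ |m| ≤ 2 * (N0 : ℤ) - 1}) := by
  intro k1 k2 hk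
  rw [Set.disjoint_left]
  rintro y ⟨x1, ⟨m1, q1, w1, rfl, hw1, hs1, he1, hm1⟩, hy1⟩
    ⟨x2, ⟨m2, q2, w2, rfl, hw2, hs2, he2, hm2⟩, hy2⟩
  set a : Fin n := ⟨0, by omega⟩ with ha
  have head_cond : ∀ (w : FreeGroup (Fin n)), ¬ startsWithGen a w →
      ∀ x ∈ w.toWord.head?, x.1 ≠ a := by
    intro w hs x hx hxa
    refine hs ⟨x.2, ?_⟩
    rw [Option.mem_def] at hx
    rw [hx]
    exact congrArg some (Prod.ext hxa rfl)
  have last_cond : ∀ (w : FreeGroup (Fin n)), ¬ endsWithGen a w →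
      ∀ x ∈ w.toWord.getLast?, x.1 ≠ a := by
    intro w hs x hx hxa
    refine hs ⟨x.2, ?_⟩
    rw [Option.mem_def] at hx
    rw [hx]
    exact congrArg some (Prod.ext hxa rfl)
  have heq : FreeGroup.of a ^ (4 * (N0 : ℤ) * k1 + m1) * w1 *
        FreeGroup.of a ^ (q1 - 4 * (N0 : ℤ) * k1)
      = FreeGroup.of a ^ (4 * (N0 : ℤ) * k2 + m2) * w2 *
        FreeGroup.of a ^ (q2 - 4 * (N0 : ℤ) * k2) := by
    have := hy1.trans hy2.symm
    simp only [] at this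
    calc FreeGroup.of a ^ (4 * (N0 : ℤ) * k1 + m1) * w1 *
          FreeGroup.of a ^ (q1 - 4 * (N0 : ℤ) * k1)
        = FreeGroup.of a ^ (4 * (N0 : ℤ) * k1) *
            (FreeGroup.of a ^ m1 * w1 * FreeGroup.of a ^ q1) *
            FreeGroup.of a ^ (-(4 * (N0 : ℤ) * k1)) := by
          rw [zpow_add, zpow_sub, zpow_neg]; group
      _ = FreeGroup.of a ^ (4 * (N0 : ℤ) * k2) *
            (FreeGroup.of a ^ m2 * w2 * FreeGroup.of a ^ q2) *
            FreeGroup.of a ^ (-(4 * (N0 : ℤ) * k2)) := this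
      _ = FreeGroup.of a ^ (4 * (N0 : ℤ) * k2 + m2) * w2 *
            FreeGroup.of a ^ (q2 - 4 * (N0 : ℤ) * k2) := by
          rw [zpow_add, zpow_sub, zpow_neg]; group
  have hpe : 4 * (N0 : ℤ) * k1 + m1 = 4 * (N0 : ℤ) * k2 + m2 :=
    exp_eq a hw1 hw2 (head_cond w1 hs1) (last_cond w1 he1)
      (head_cond w2 hs2) (last_cond w2 he2) heq
  -- arithmetic contradiction
  have hN : (1 : ℤ) ≤ (N0 : ℤ) := by exact_mod_cast hN0
  have hma := abs_le.mp hm1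
  have hmb := abs_le.mp hm2
  rcases hk.lt_or_gt with hlt | hlt
  · have h1 : k2 - k1 ≥ 1 := by omega
    nlinarith [mul_nonneg (by positivity : (0:ℤ) ≤ 4 * (N0:ℤ)) (by linarith : (0:ℤ) ≤ k2 - k1 - 1)]
  · have h1 : k1 - k2 ≥ 1 := by omega
    nlinarith [mul_nonneg (by positivity : (0:ℤ) ≤ 4 * (N0:ℤ)) (by linarith : (0:ℤ) ≤ k1 - k2 - 1)]
end

section
/- Let G = F(n_1) × ⋯ × F(n_N) with each n_i ≥ 2, let H = ⟨g_{1,1}⟩ × ⋯ × ⟨g_{N,1}⟩, and for each i let G_i = F(n_1) × ⋯ × ⟨g_{i,1}⟩ × ⋯ × F(n_N) (the i-th free factor replaced by the cyclic subgroup generated by g_{i,1}). Let S_1 ⊆ G be a finite set disjoint from (⋃_i G_i) ∪ H, and let N_0 − 1 be the maximal word length of elements of S_1. Let S be the set of elements w of G such that, for every i, w contains a nonzero power of some g_{i,j} with j ≥ 2, and w begins and ends (in its canonical decomposition) with powers of each g_{i,1} of exponent at least 2N_0 − 1 in absolute value. Then (S S_1) ∩ (S_1 S) = ∅. -/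
open Pointwise

/-- H = ⟨g_{1,1}⟩ × ⋯ × ⟨g_{N,1}⟩ inside G = F(n_1) × ⋯ × F(n_N). -/
def Hset (N : ℕ) (n : Fin N → ℕ) (hn : ∀ i, 2 ≤ n i) :
    Set (∀ i, FreeGroup (Fin (n i))) :=
  {w | ∀ i, ∃ m : ℤ,
    w i = (FreeGroup.of (⟨0, by have := hn i; omega⟩ : Fin (n i))) ^ m}

/-- G_i: the i-th free factor replaced by ⟨g_{i,1}⟩. -/
def Giset (N : ℕ) (n : Fin N → ℕ) (hn : ∀ i, 2 ≤ n i) (i : Fin N) :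
    Set (∀ j, FreeGroup (Fin (n j))) :=
  {w | ∃ m : ℤ,
    w i = (FreeGroup.of (⟨0, by have := hn i; omega⟩ : Fin (n i))) ^ m}

/-- total reduced word length of an element of the direct product. -/
def wordLen (N : ℕ) (n : Fin N → ℕ) (w : ∀ i, FreeGroup (Fin (n i))) : ℕ :=
  ∑ i, (w i).toWord.length

/-- The set S: words which, for every i, contain a nonzero power of some
g_{i,j} with j ≥ 2 (i.e. have nontrivial middle part w_i in the canonical
decomposition) and begin and end with powers of each g_{i,1} of exponent at
least 2N₀ − 1 in absolute value. -/
def Sset (N : ℕ) (n : Fin N → ℕ) (hn : ∀ i, 2 ≤ n i) (N0 : ℕ) :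
    Set (∀ i, FreeGroup (Fin (n i))) :=
  {w | ∀ i, ∃ (m k : ℤ) (wi : FreeGroup (Fin (n i))),
    w i = (FreeGroup.of (⟨0, by have := hn i; omega⟩ : Fin (n i))) ^ m * wi *
          (FreeGroup.of (⟨0, by have := hn i; omega⟩ : Fin (n i))) ^ k ∧
    wi ≠ 1 ∧
    ¬ startsWithGen (⟨0, by have := hn i; omega⟩ : Fin (n i)) wi ∧
    ¬ endsWithGen (⟨0, by have := hn i; omega⟩ : Fin (n i)) wi ∧
    2 * (N0 : ℤ) - 1 ≤ |m| ∧ 2 * (N0 : ℤ) - 1 ≤ |k|}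

namespace MyAux

open FreeGroup List

variable {α : Type*} [DecidableEq α]

/-- "no cancellation" relation between adjacent letters. -/
def NR : (α × Bool) → (α × Bool) → Prop := fun x y => ¬(x.1 = y.1 ∧ x.2 = !y.2)

lemma nr_of_fst_ne {x y : α × Bool} (h : x.1 ≠ y.1) : NR x y := fun hc => h hc.1

lemma reduce_eq_self_of_chain' {L : List (α × Bool)} (h : L.Chain' NR) :
    FreeGroup.reduce L = L := by
  induction L with
  | nil => rfl
  | cons x t ih =>
    have ht : FreeGroup.reduce t = t := ih h.tail
    rw [FreeGroup.reduce.cons, ht]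
    cases t with
    | nil => rfl
    | cons hd tl =>
      have : NR x hd := List.isChain_cons_cons.mp h |>.1
      simp only [NR] at this
      simp [this]

lemma reduce_tail {p : α × Bool} {t : List (α × Bool)}
    (h : FreeGroup.reduce (p :: t) = p :: t) : FreeGroup.reduce t = t := by
  rw [FreeGroup.reduce.cons] at h
  cases hr : FreeGroup.reduce t with
  | nil => rw [hr] at h; simp at h; simp [h]
  | cons hd tl =>
    rw [hr] at h; dsimp only at h
    by_cases hc : p.1 = hd.1 ∧ p.2 = !hd.2
    · rw [if_pos hc] at h
      have hle : (FreeGroup.reduce t).length ≤ t.length := FreeGroup.reduce.red.length_le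
      rw [hr, h] at hle
      simp at hle
    · rw [if_neg hc] at h
      exact (List.cons.injEq _ _ _ _).mp h |>.2

lemma chain'_of_reduce_eq_self {L : List (α × Bool)} (h : FreeGroup.reduce L = L) :
    L.Chain' NR := by
  induction L with
  | nil => exact List.isChain_nil
  | cons x t ih =>
    have ht := reduce_tail h
    refine List.isChain_cons.mpr ⟨?_, ih ht⟩
    intro y hy
    cases t with
    | nil => simp at hy
    | cons hd tl =>
      simp at hy
      subst hy
      rw [FreeGroup.reduce.cons, ht] at h
      dsimp only at h
      by_cases hc : x.1 = hd.1 ∧ x.2 = !hd.2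
      · rw [if_pos hc] at h
        have := congrArg List.length h
        simp at this; omega
      · exact hc

lemma chain'_toWord (x : FreeGroup α) : x.toWord.Chain' NR :=
  chain'_of_reduce_eq_self (FreeGroup.reduce_toWord x)

/-- toWord of an integer power of a generator. -/
lemma toWord_zpow (a : α) (z : ℤ) :
    (FreeGroup.of a ^ z) = FreeGroup.mk (List.replicate z.natAbs (a, decide (0 ≤ z))) := by
  have hnat : ∀ p : ℕ, (FreeGroup.of a ^ (p:ℕ)) = FreeGroup.mk (List.replicate p (a, true)) := by
    intro p
    induction p with
    | zero => simp [FreeGroup.one_eq_mk]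
    | succ p ih =>
      rw [pow_succ, ih]
      have : FreeGroup.of a = FreeGroup.mk [(a, true)] := rfl
      rw [this, FreeGroup.mul_mk, ← List.replicate_succ']
  cases z with
  | ofNat p =>
    simp only [Int.ofNat_eq_coe, zpow_natCast, Int.natAbs_natCast]
    rw [hnat p]
    norm_num
  | negSucc p =>
    rw [zpow_negSucc, hnat (p+1), FreeGroup.inv_mk]
    congr 1
    simp [FreeGroup.invRev, Int.natAbs_negSucc]
    


lemma toWord_tail {x : FreeGroup α} {p : α × Bool} {t : List (α × Bool)}
    (h : x.toWord = p :: t) : (FreeGroup.mk t).toWord = t := by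
  rw [FreeGroup.toWord_mk]
  exact reduce_tail (by rw [← h]; exact FreeGroup.reduce_toWord x)

/-- left decomposition: strip off the maximal power of `of a` at the front. -/
lemma exists_decomp_left (a : α) (x : FreeGroup α) :
    ∃ (u : ℤ) (y : FreeGroup α), x = FreeGroup.of a ^ u * y ∧
      (∀ p ∈ y.toWord.head?, p.1 ≠ a) ∧
      u.natAbs + y.toWord.length ≤ x.toWord.length := by
  generalize hL : x.toWord = L
  induction L generalizing x with
  | nil =>
    refine ⟨0, x, by simp, ?_, by simp [hL]⟩
    simp [hL]
  | cons p t ih =>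
    by_cases hp : p.1 = a
    · have hx' : (FreeGroup.mk t).toWord = t := toWord_tail hL
      obtain ⟨u, y, hdec, hhead, hlen⟩ := ih (FreeGroup.mk t) hx'
      have hxeq : x = FreeGroup.mk [p] * FreeGroup.mk t := by
        rw [FreeGroup.mul_mk, List.singleton_append, ← hL, FreeGroup.mk_toWord]
      set ε : ℤ := if p.2 then 1 else -1 with hε
      have hp2 : p = (a, p.2) := Prod.ext hp rfl
      have hmk : FreeGroup.mk [p] = FreeGroup.of a ^ ε := by
        cases hpb : p.2 with
        | true =>
          rw [hε, if_pos hpb, zpow_one, hp2, hpb]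
          rfl
        | false =>
          rw [hε, if_neg (by simp [hpb]), zpow_neg, zpow_one, hp2, hpb]
          have : FreeGroup.of a = FreeGroup.mk [(a, true)] := rfl
          rw [this, FreeGroup.inv_mk]
          congr 1
      refine ⟨ε + u, y, ?_, hhead, ?_⟩
      · rw [hxeq, hmk, hdec, ← mul_assoc, ← zpow_add]
      · have hε1 : ε.natAbs = 1 := by cases hpb : p.2 <;> simp [hε, hpb]
        have h2 : (ε + u).natAbs ≤ 1 + u.natAbs := by
          calc (ε + u).natAbs ≤ ε.natAbs + u.natAbs := Int.natAbs_add_le ε u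
          _ = 1 + u.natAbs := by rw [hε1]
        simp only [List.length_cons]
        omega
    · refine ⟨0, x, by simp, ?_, by simp [hL]⟩
      intro q hq
      rw [hL] at hq
      simp at hq
      subst hq
      exact hp

/-- right decomposition: strip off the maximal power of `of a` at the end. -/
lemma exists_decomp_right (a : α) (x : FreeGroup α) :
    ∃ (u : ℤ) (y : FreeGroup α), x = y * FreeGroup.of a ^ u ∧
      (∀ p ∈ y.toWord.getLast?, p.1 ≠ a) ∧
      u.natAbs + y.toWord.length ≤ x.toWord.length := by
  obtain ⟨u, z, hdec, hhead, hlen⟩ := exists_decomp_left a x⁻¹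
  refine ⟨-u, z⁻¹, ?_, ?_, ?_⟩
  · have := congrArg (·⁻¹) hdec
    simpa [mul_inv_rev, zpow_neg] using this
  · intro p hp
    rw [FreeGroup.toWord_inv, FreeGroup.invRev] at hp
    rw [List.getLast?_reverse, List.head?_map] at hp
    cases hh : z.toWord.head? with
    | none => rw [hh] at hp; simp at hp
    | some q =>
      rw [hh] at hp
      simp only [Option.map_some, Option.mem_def, Option.some.injEq] at hp
      have := hhead q (by rw [hh]; rfl)
      rw [← hp]
      exact this
  · rw [FreeGroup.toWord_inv, FreeGroup.invRev_length]
    rw [FreeGroup.toWord_inv, FreeGroup.invRev_length] at hlen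
    simpa using hlen


/-- notation for the reduced word of `of a ^ z`. -/
def rep (a : α) (z : ℤ) : List (α × Bool) := List.replicate z.natAbs (a, decide (0 ≤ z))

omit [DecidableEq α] in
lemma rep_length (a : α) (z : ℤ) : (rep a z).length = z.natAbs := List.length_replicate

lemma chain'_NR_rep (a : α) (z : ℤ) : (rep a z).Chain' NR :=
  List.isChain_replicate_of_rel _ (by simp [NR])

/-- the four-block concatenation is reduced. -/
lemma chain'_four (a : α) (z z' : ℤ) (hz' : z' ≠ 0) (w y : FreeGroup α)
    (hw : w.toWord ≠ [])
    (hws : ∀ p ∈ w.toWord.head?, p.1 ≠ a) (hwe : ∀ p ∈ w.toWord.getLast?, p.1 ≠ a)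
    (hy : ∀ p ∈ y.toWord.head?, p.1 ≠ a) :
    (rep a z ++ (w.toWord ++ (rep a z' ++ y.toWord))).Chain' NR := by
  have hz'n : z'.natAbs ≠ 0 := Int.natAbs_ne_zero.mpr hz'
  show List.IsChain NR _
  rw [List.isChain_append]
  refine ⟨chain'_NR_rep a z, ?_, ?_⟩
  · rw [List.isChain_append]
    refine ⟨chain'_toWord w, ?_, ?_⟩
    · rw [List.isChain_append]
      refine ⟨chain'_NR_rep a z', chain'_toWord y, ?_⟩
      intro x hx q hq
      have hx' : x = (a, decide (0 ≤ z')) := by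
        rw [rep, List.getLast?_replicate, if_neg hz'n] at hx
        simp only [Option.mem_def, Option.some.injEq] at hx
        exact hx.symm
      exact nr_of_fst_ne (by rw [hx']; exact (hy q hq).symm)
    · intro x hx q hq
      rw [List.head?_append, rep, List.head?_replicate, if_neg hz'n] at hq
      have hq' : q = (a, decide (0 ≤ z')) := by
        simp only [Option.some_or, Option.mem_def, Option.some.injEq] at hq
        exact hq.symm
      exact nr_of_fst_ne (by rw [hq']; exact hwe x hx)
  · intro x hx q hq
    have hx' : x = (a, decide (0 ≤ z)) := by
      rw [rep, List.getLast?_replicate] at hx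
      simp only [Option.mem_def] at hx
      split_ifs at hx with h
      simp only [Option.some.injEq] at hx
      exact hx.symm
    rw [List.head?_append_of_ne_nil _ hw] at hq
    exact nr_of_fst_ne (by rw [hx']; exact (hws q hq).symm)

/-- reduced word of the canonical four-block product. -/
lemma toWord_four (a : α) (z z' : ℤ) (hz' : z' ≠ 0) (w y : FreeGroup α)
    (hw : w.toWord ≠ [])
    (hws : ∀ p ∈ w.toWord.head?, p.1 ≠ a) (hwe : ∀ p ∈ w.toWord.getLast?, p.1 ≠ a)
    (hy : ∀ p ∈ y.toWord.head?, p.1 ≠ a) :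
    (FreeGroup.of a ^ z * w * (FreeGroup.of a ^ z' * y)).toWord =
      rep a z ++ (w.toWord ++ (rep a z' ++ y.toWord)) := by
  have hmk : FreeGroup.of a ^ z * w * (FreeGroup.of a ^ z' * y) =
      FreeGroup.mk (rep a z ++ (w.toWord ++ (rep a z' ++ y.toWord))) := by
    conv_lhs => rw [toWord_zpow a z, toWord_zpow a z', ← FreeGroup.mk_toWord (x := w),
      ← FreeGroup.mk_toWord (x := y)]
    rw [FreeGroup.mul_mk, FreeGroup.mul_mk, FreeGroup.mul_mk]
    congr 1
    simp [rep, List.append_assoc]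
  rw [hmk, FreeGroup.toWord_mk,
    reduce_eq_self_of_chain' (chain'_four a z z' hz' w y hw hws hwe hy)]


/-- mirrored version: general block first. -/
lemma chain'_four' (a : α) (z z' : ℤ) (hz : z ≠ 0) (w y : FreeGroup α)
    (hw : w.toWord ≠ [])
    (hws : ∀ p ∈ w.toWord.head?, p.1 ≠ a) (hwe : ∀ p ∈ w.toWord.getLast?, p.1 ≠ a)
    (hy : ∀ p ∈ y.toWord.getLast?, p.1 ≠ a) :
    (y.toWord ++ (rep a z ++ (w.toWord ++ rep a z'))).Chain' NR := by
  have hzn : z.natAbs ≠ 0 := Int.natAbs_ne_zero.mpr hz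
  show List.IsChain NR _
  rw [List.isChain_append]
  refine ⟨chain'_toWord y, ?_, ?_⟩
  · rw [List.isChain_append]
    refine ⟨chain'_NR_rep a z, ?_, ?_⟩
    · rw [List.isChain_append]
      refine ⟨chain'_toWord w, chain'_NR_rep a z', ?_⟩
      intro x hx q hq
      have hq' : q = (a, decide (0 ≤ z')) := by
        rw [rep, List.head?_replicate] at hq
        simp only [Option.mem_def] at hq
        split_ifs at hq with h
        simp only [Option.some.injEq] at hq
        exact hq.symm
      exact nr_of_fst_ne (by rw [hq']; exact hwe x hx)
    · intro x hx q hq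
      have hx' : x = (a, decide (0 ≤ z)) := by
        rw [rep, List.getLast?_replicate, if_neg hzn] at hx
        simp only [Option.mem_def, Option.some.injEq] at hx
        exact hx.symm
      rw [List.head?_append_of_ne_nil _ hw] at hq
      exact nr_of_fst_ne (by rw [hx']; exact (hws q hq).symm)
  · intro x hx q hq
    rw [List.head?_append, rep, List.head?_replicate, if_neg hzn] at hq
    have hq' : q = (a, decide (0 ≤ z)) := by
      simp only [Option.some_or, Option.mem_def, Option.some.injEq] at hq
      exact hq.symm
    exact nr_of_fst_ne (by rw [hq']; exact hy x hx)

lemma toWord_four' (a : α) (z z' : ℤ) (hz : z ≠ 0) (w y : FreeGroup α)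
    (hw : w.toWord ≠ [])
    (hws : ∀ p ∈ w.toWord.head?, p.1 ≠ a) (hwe : ∀ p ∈ w.toWord.getLast?, p.1 ≠ a)
    (hy : ∀ p ∈ y.toWord.getLast?, p.1 ≠ a) :
    (y * (FreeGroup.of a ^ z * w * FreeGroup.of a ^ z')).toWord =
      y.toWord ++ (rep a z ++ (w.toWord ++ rep a z')) := by
  have hmk : y * (FreeGroup.of a ^ z * w * FreeGroup.of a ^ z') =
      FreeGroup.mk (y.toWord ++ (rep a z ++ (w.toWord ++ rep a z'))) := by
    conv_lhs => rw [toWord_zpow a z, toWord_zpow a z', ← FreeGroup.mk_toWord (x := w),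
      ← FreeGroup.mk_toWord (x := y)]
    rw [FreeGroup.mul_mk, FreeGroup.mul_mk, FreeGroup.mul_mk]
    congr 1
    simp [rep, List.append_assoc]
  rw [hmk, FreeGroup.toWord_mk,
    reduce_eq_self_of_chain' (chain'_four' a z z' hz w y hw hws hwe hy)]

/-- the key one-free-group lemma. -/
lemma key (a : α) (N0 : ℕ) (hN0 : 1 ≤ N0)
    (m k m' k' : ℤ) (w w' b c : FreeGroup α)
    (hw1 : w ≠ 1)
    (hws : ∀ p ∈ w.toWord.head?, p.1 ≠ a) (hwe : ∀ p ∈ w.toWord.getLast?, p.1 ≠ a)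
    (hw1' : w' ≠ 1)
    (hws' : ∀ p ∈ w'.toWord.head?, p.1 ≠ a) (hwe' : ∀ p ∈ w'.toWord.getLast?, p.1 ≠ a)
    (hm : 2 * (N0:ℤ) - 1 ≤ |m|) (hk : 2 * (N0:ℤ) - 1 ≤ |k|)
    (hm' : 2 * (N0:ℤ) - 1 ≤ |m'|) (hk' : 2 * (N0:ℤ) - 1 ≤ |k'|)
    (hb : b.toWord.length ≤ N0 - 1) (hc : c.toWord.length ≤ N0 - 1)
    (hcp : ∀ t : ℤ, c ≠ FreeGroup.of a ^ t)
    (heq : FreeGroup.of a ^ m * w * FreeGroup.of a ^ k * b =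
           c * (FreeGroup.of a ^ m' * w' * FreeGroup.of a ^ k')) : False := by
  obtain ⟨u, b0, hbdec, hb0, hbu⟩ := exists_decomp_left a b
  obtain ⟨t, c0, hcdec, hc0, hct⟩ := exists_decomp_right a c
  have hwnil : w.toWord ≠ [] := fun h => hw1 (FreeGroup.toWord_eq_nil_iff.mp h)
  have hwnil' : w'.toWord ≠ [] := fun h => hw1' (FreeGroup.toWord_eq_nil_iff.mp h)
  have hc0ne : c0.toWord ≠ [] := by
    simp only [ne_eq, FreeGroup.toWord_eq_nil_iff]
    rintro rfl
    exact hcp t (by simpa using hcdec)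
  rw [Int.abs_eq_natAbs] at hm hk hm' hk'
  have hku : k + u ≠ 0 := by omega
  have htm : t + m' ≠ 0 := by omega
  have heq2 : FreeGroup.of a ^ m * w * (FreeGroup.of a ^ (k + u) * b0) =
      c0 * (FreeGroup.of a ^ (t + m') * w' * FreeGroup.of a ^ k') := by
    rw [hbdec, hcdec] at heq
    rw [zpow_add, zpow_add]
    calc FreeGroup.of a ^ m * w * (FreeGroup.of a ^ k * FreeGroup.of a ^ u * b0)
        = FreeGroup.of a ^ m * w * FreeGroup.of a ^ k * (FreeGroup.of a ^ u * b0) := by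
          group
      _ = c0 * FreeGroup.of a ^ t * (FreeGroup.of a ^ m' * w' * FreeGroup.of a ^ k') := heq
      _ = c0 * (FreeGroup.of a ^ t * FreeGroup.of a ^ m' * w' * FreeGroup.of a ^ k') := by
          group
  have hwords : rep a m ++ (w.toWord ++ (rep a (k+u) ++ b0.toWord)) =
      c0.toWord ++ (rep a (t+m') ++ (w'.toWord ++ rep a k')) := by
    rw [← toWord_four a m (k+u) hku w b0 hwnil hws hwe hb0,
      ← toWord_four' a (t+m') k' htm w' c0 hwnil' hws' hwe' hc0, heq2]
  set p := c0.toWord.length - 1 with hpdef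
  have hp1 : p < c0.toWord.length := by
    have := List.length_pos_iff.mpr hc0ne
    omega
  have hplt : p < (rep a m).length := by
    rw [rep_length]
    omega
  have hp2 : p < (rep a m ++ (w.toWord ++ (rep a (k+u) ++ b0.toWord))).length := by
    rw [List.length_append]
    omega
  have e1 := List.getElem_of_eq hwords hp2
  rw [List.getElem_append_left hplt] at e1
  simp only [rep, List.getElem_replicate] at e1
  rw [List.getElem_append_left hp1] at e1
  have hlast : c0.toWord.getLast? = some (c0.toWord[p]'hp1) := by
    rw [List.getLast?_eq_getElem?, ← hpdef, List.getElem?_eq_getElem hp1]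
  exact hc0 _ hlast (by rw [← e1])

end MyAux

/-- with S₁ ⊆ G finite, disjoint from (⋃ᵢ Gᵢ) ∪ H, of maximal word
length N₀ − 1, and S as above, one has (S S₁) ∩ (S₁ S) = ∅. -/
theorem stmt_2 (N : ℕ) (n : Fin N → ℕ) (hn : ∀ i, 2 ≤ n i) (N0 : ℕ) (hN0 : 1 ≤ N0)
    (S1 : Set (∀ i, FreeGroup (Fin (n i)))) (hfin : S1.Finite)
    (hdisj : ∀ s ∈ S1, s ∉ Hset N n hn ∧ ∀ i, s ∉ Giset N n hn i)
    (hlen : ∀ s ∈ S1, wordLen N n s ≤ N0 - 1) :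
    (Sset N n hn N0 * S1) ∩ (S1 * Sset N n hn N0) = ∅ := by
  rw [Set.eq_empty_iff_forall_notMem]
  rintro x ⟨hx1, hx2⟩
  rw [Set.mem_mul] at hx1 hx2
  obtain ⟨aS, haS, b, hb, hab⟩ := hx1
  obtain ⟨c, hcS1, d, hdS, hcd⟩ := hx2
  have hN : N ≠ 0 := by
    rintro rfl
    exact (hdisj b hb).1 (fun i => i.elim0)
  set i : Fin N := ⟨0, Nat.pos_of_ne_zero hN⟩ with hi
  set g0 : Fin (n i) := (⟨0, by have := hn i; omega⟩ : Fin (n i)) with hg0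
  have hcomp : aS i * b i = c i * d i := by
    have h := hab.trans hcd.symm
    exact congrFun h i
  obtain ⟨m, k, wi, hwdec, hwne, hnstart, hnend, hm, hk⟩ := haS i
  obtain ⟨m', k', wi', hwdec', hwne', hnstart', hnend', hm', hk'⟩ := hdS i
  have hws : ∀ p ∈ wi.toWord.head?, p.1 ≠ g0 := by
    intro p hp hpa
    obtain ⟨p1, p2⟩ := p
    have hpa' : p1 = g0 := hpa
    rw [hpa'] at hp
    exact hnstart ⟨p2, Option.mem_def.mp hp⟩
  have hwe : ∀ p ∈ wi.toWord.getLast?, p.1 ≠ g0 := by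
    intro p hp hpa
    obtain ⟨p1, p2⟩ := p
    have hpa' : p1 = g0 := hpa
    rw [hpa'] at hp
    exact hnend ⟨p2, Option.mem_def.mp hp⟩
  have hws' : ∀ p ∈ wi'.toWord.head?, p.1 ≠ g0 := by
    intro p hp hpa
    obtain ⟨p1, p2⟩ := p
    have hpa' : p1 = g0 := hpa
    rw [hpa'] at hp
    exact hnstart' ⟨p2, Option.mem_def.mp hp⟩
  have hwe' : ∀ p ∈ wi'.toWord.getLast?, p.1 ≠ g0 := by
    intro p hp hpa
    obtain ⟨p1, p2⟩ := p
    have hpa' : p1 = g0 := hpa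
    rw [hpa'] at hp
    exact hnend' ⟨p2, Option.mem_def.mp hp⟩
  have hblen : (b i).toWord.length ≤ N0 - 1 := by
    have h1 : (b i).toWord.length ≤ wordLen N n b :=
      Finset.single_le_sum (f := fun j => (b j).toWord.length)
        (fun j _ => Nat.zero_le _) (Finset.mem_univ i)
    exact h1.trans (hlen b hb)
  have hclen : (c i).toWord.length ≤ N0 - 1 := by
    have h1 : (c i).toWord.length ≤ wordLen N n c :=
      Finset.single_le_sum (f := fun j => (c j).toWord.length)
        (fun j _ => Nat.zero_le _) (Finset.mem_univ i)
    exact h1.trans (hlen c hcS1)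
  have hcp : ∀ t : ℤ, c i ≠ FreeGroup.of g0 ^ t := by
    intro t ht
    exact (hdisj c hcS1).2 i ⟨t, ht⟩
  refine MyAux.key g0 N0 hN0 m k m' k' wi wi' (b i) (c i) hwne hws hwe hwne' hws' hwe'
    hm hk hm' hk' hblen hclen hcp ?_
  rw [← hwdec, ← hwdec']
  exact hcomp
end

section
/- With G, H, G_i, S_1, S as above (S_1 finite, disjoint from (⋃_i G_i) ∪ H, with maximal word length N_0 − 1; S the set of words containing for each i a nonzero power of some g_{i,j}, j ≥ 2, and beginning and ending with powers of each g_{i,1} of exponent ≥ 2N_0 − 1 in absolute value), one has (S_1 H) ∩ (S_1 S) = ∅, (H S_1) ∩ (S_1 S) = ∅, (H S_1) ∩ (S S_1) = ∅, and (S_1 H) ∩ (S S_1) = ∅. -/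
open Pointwise


namespace Scratch
open FreeGroup List

variable {α : Type*} [DecidableEq α]

/-- no-cancellation predicate on words -/
def NR (W : List (α × Bool)) : Prop :=
  List.Chain' (fun p q => ¬(p.1 = q.1 ∧ p.2 = !q.2)) W

theorem reduce_eq_self_of_NR {W : List (α × Bool)} (h : NR W) : FreeGroup.reduce W = W := by
  induction W with
  | nil => rfl
  | cons x R ih =>
    have hR : NR R := h.tail
    rw [FreeGroup.reduce.cons, ih hR]
    cases R with
    | nil => rfl
    | cons hd tl =>
      have : ¬(x.1 = hd.1 ∧ x.2 = !hd.2) := List.isChain_cons_cons.mp h |>.1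
      simp [this]

theorem NR_of_reduce_eq_self {W : List (α × Bool)} (h : FreeGroup.reduce W = W) : NR W := by
  induction W with
  | nil => exact List.isChain_nil
  | cons x R ih =>
    have hlen : ∀ (L : List (α × Bool)), (FreeGroup.reduce L).length ≤ L.length :=
      fun L => FreeGroup.Red.length_le (FreeGroup.reduce.red)
    cases hR : FreeGroup.reduce R with
    | nil =>
      rw [FreeGroup.reduce.cons, hR] at h
      simp at h
      rw [h]
      exact List.isChain_singleton x
    | cons hd tl =>
      rw [FreeGroup.reduce.cons, hR] at h
      by_cases hc : x.1 = hd.1 ∧ x.2 = !hd.2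
      · simp only [hc, if_true] at h
        exfalso
        have := hlen R
        rw [hR] at this
        have h2 : tl.length = R.length + 1 := by
          have := congrArg List.length h; simpa using this
        simp at this; omega
      · simp only [hc, if_false] at h
        have hR' : R = hd :: tl := by
          have := congrArg List.tail h; simpa using this.symm
        have : NR R := ih (by rw [hR, hR'])
        rw [hR'] at this ⊢
        exact List.isChain_cons_cons.mpr ⟨hc, this⟩

theorem toWord_mk_of_NR {W : List (α × Bool)} (h : NR W) :
    (FreeGroup.mk W).toWord = W := by
  rw [FreeGroup.toWord_mk, reduce_eq_self_of_NR h]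

theorem NR_toWord (x : FreeGroup α) : NR x.toWord :=
  NR_of_reduce_eq_self x.reduce_toWord

end Scratch

namespace Scratch
open FreeGroup List

variable {α : Type*} [DecidableEq α]

theorem invRev_replicate (c : ℕ) (a : α) (b : Bool) :
    FreeGroup.invRev (List.replicate c (a, b)) = List.replicate c (a, !b) := by
  simp [FreeGroup.invRev]

theorem toWord_zpow (a : α) (m : ℤ) :
    ∃ σ : Bool, (FreeGroup.of a ^ m).toWord = List.replicate m.natAbs (a, σ) := by
  rcases m with n | n
  · exact ⟨true, by rw [Int.ofNat_eq_coe, zpow_natCast, FreeGroup.toWord_of_pow]; rfl⟩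
  · refine ⟨false, ?_⟩
    have : FreeGroup.of a ^ (Int.negSucc n) = (FreeGroup.of a ^ (n+1 : ℕ))⁻¹ := by
      rw [zpow_negSucc]
    rw [this, FreeGroup.toWord_inv, FreeGroup.toWord_of_pow, invRev_replicate]
    rfl

theorem mk_replicate_eq_zpow (a : α) (c : ℕ) (σ : Bool) :
    ∃ e : ℤ, FreeGroup.mk (List.replicate c (a, σ)) = FreeGroup.of a ^ e ∧ e.natAbs = c := by
  cases σ
  · refine ⟨-(c : ℤ), ?_, by simp⟩
    apply FreeGroup.toWord_injective
    rw [FreeGroup.toWord_mk, FreeGroup.reduce_replicate, zpow_neg, zpow_natCast,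
      FreeGroup.toWord_inv, FreeGroup.toWord_of_pow, invRev_replicate]
    simp
  · refine ⟨(c : ℤ), ?_, by simp⟩
    apply FreeGroup.toWord_injective
    rw [FreeGroup.toWord_mk, FreeGroup.reduce_replicate, zpow_natCast,
      FreeGroup.toWord_of_pow]

theorem repl_of_NR_const (a : α) : ∀ (T : List (α × Bool)), NR T → (∀ p ∈ T, p.1 = a) →
    ∃ σ, T = List.replicate T.length (a, σ) := by
  intro T
  induction T with
  | nil => exact fun _ _ => ⟨true, rfl⟩
  | cons p rest ih =>
    intro hNR hall
    obtain ⟨σ, hσ⟩ := ih hNR.tail (fun x hx => hall x (List.mem_cons_of_mem _ hx))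
    have hp : p.1 = a := hall p (List.mem_cons_self)
    refine ⟨p.2, ?_⟩
    cases rest with
    | nil =>
      obtain ⟨p1, p2⟩ := p
      simp only at hp
      subst hp
      rfl
    | cons q rest' =>
      have hq : q.1 = a := hall q (by simp)
      have hc := (List.isChain_cons_cons.mp hNR).1
      have hq2 : q.2 = p.2 := by
        have hnc : ¬ p.2 = !q.2 := fun h => hc ⟨hp.trans hq.symm, h⟩
        rw [Bool.eq_not_iff] at hnc
        exact (not_not.mp hnc).symm
      have hqσ : σ = q.2 := by
        have := congrArg List.head? hσ
        rw [List.head?_cons, List.length_cons, List.replicate_succ, List.head?_cons,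
          Option.some_inj] at this
        rw [this]
      have hpq : p = (a, p.2) := by
        obtain ⟨p1, p2⟩ := p; simp only at hp; subst hp; rfl
      rw [List.length_cons, List.replicate_succ, hσ, hqσ, hq2]
      exact List.cons_eq_cons.mpr ⟨hpq, by simp⟩

theorem strip (a : α) (x : FreeGroup α) :
    ∃ (Q : List (α × Bool)) (e : ℤ),
      x = FreeGroup.mk Q * FreeGroup.of a ^ e ∧ NR Q ∧
      Q.length + e.natAbs = x.toWord.length ∧
      (∀ p ∈ Q.getLast?, p.1 ≠ a) := by
  classical
  set W := x.toWord with hW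
  set D := W.reverse.dropWhile (fun p => p.1 = a) with hD
  set T' := W.reverse.takeWhile (fun p => p.1 = a) with hT'
  have hsplit : W = D.reverse ++ T'.reverse := by
    have : T' ++ D = W.reverse := List.takeWhile_append_dropWhile ..
    calc W = W.reverse.reverse := (List.reverse_reverse W).symm
    _ = (T' ++ D).reverse := by rw [this]
    _ = D.reverse ++ T'.reverse := by rw [List.reverse_append]
  have hNRW : NR W := NR_toWord x
  rw [hsplit] at hNRW
  have hNRQ : NR D.reverse := hNRW.left_of_append
  have hNRT : NR T'.reverse := hNRW.right_of_append
  have hallT : ∀ p ∈ T'.reverse, p.1 = a := by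
    intro p hp
    have := List.mem_takeWhile_imp (List.mem_reverse.mp hp)
    simpa using this
  obtain ⟨σ, hσ⟩ := repl_of_NR_const a T'.reverse hNRT hallT
  obtain ⟨e, he, hena⟩ := mk_replicate_eq_zpow a T'.reverse.length σ
  refine ⟨D.reverse, e, ?_, hNRQ, ?_, ?_⟩
  · conv_lhs => rw [← FreeGroup.mk_toWord (x := x)]
    rw [← hW, hsplit, ← FreeGroup.mul_mk, ← he, ← hσ]
  · rw [hsplit, List.length_append, hena, List.length_reverse]
  · intro p hp
    rw [List.getLast?_reverse] at hp
    have h2 := List.head?_dropWhile_not (fun p => decide (p.1 = a)) W.reverse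
    rw [← hD] at h2
    rw [hp] at h2
    simpa using h2

end Scratch

namespace Scratch
open FreeGroup List

variable {α : Type*} [DecidableEq α]

/-- W contains an interior run of ≥ N0 letters of index a, flanked by non-a letters. -/
def Pp (a : α) (N0 : ℕ) (W : List (α × Bool)) : Prop :=
  ∃ (A : List (α × Bool)) (u : α × Bool) (C : List (α × Bool)) (v : α × Bool)
    (B : List (α × Bool)),
    W = A ++ u :: (C ++ v :: B) ∧ u.1 ≠ a ∧ v.1 ≠ a ∧ (∀ x ∈ C, x.1 = a) ∧ N0 ≤ C.length

theorem not_Pp_of_suffix_const {a : α} {N0 : ℕ} {W Q T : List (α × Bool)}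
    (hW : W = Q ++ T) (hT : ∀ p ∈ T, p.1 = a) (hQ : Q.length ≤ N0 - 1) (hN0 : 1 ≤ N0) :
    ¬ Pp a N0 W := by
  rintro ⟨A, u, C, v, B, hdec, hu, hv, hC, hlen⟩
  set pos := (A ++ u :: C).length with hpos
  have h1 : W.drop pos = v :: B := by
    rw [hdec, ← List.drop_left (l₁ := A ++ u :: C) (l₂ := v :: B)]
    congr 1
    simp
  have hposlen : pos = A.length + 1 + C.length := by simp [hpos]; omega
  by_cases hcase : pos < Q.length
  · omega
  · have h2 : W.drop pos = T.drop (pos - Q.length) := by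
      rw [hW, List.drop_append]
      rw [List.drop_eq_nil_of_le (by omega), List.nil_append]
    have hvT : v ∈ T := by
      have : v ∈ T.drop (pos - Q.length) := by rw [← h2, h1]; exact List.mem_cons_self
      exact List.drop_subset _ _ this
    exact hv (hT v hvT)

theorem Pp_invRev {a : α} {N0 : ℕ} {W : List (α × Bool)} (h : Pp a N0 W) :
    Pp a N0 (FreeGroup.invRev W) := by
  classical
  obtain ⟨A, u, C, v, B, hdec, hu, hv, hC, hlen⟩ := h
  refine ⟨FreeGroup.invRev B, (v.1, !v.2), FreeGroup.invRev C, (u.1, !u.2), FreeGroup.invRev A,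
    ?_, hv, hu, ?_, ?_⟩
  · rw [hdec]
    simp only [FreeGroup.invRev, List.map_append, List.map_cons, List.reverse_append,
      List.reverse_cons, List.append_assoc]
    simp
  · intro x hx
    simp only [FreeGroup.invRev, List.mem_reverse, List.mem_map] at hx
    obtain ⟨y, hy, rfl⟩ := hx
    exact hC y hy
  · rw [FreeGroup.invRev_length]; exact hlen

theorem NR_append {X Y : List (α × Bool)} (hX : NR X) (hY : NR Y)
    (hj : ∀ p ∈ X.getLast?, ∀ q ∈ Y.head?, ¬(p.1 = q.1 ∧ p.2 = !q.2)) : NR (X ++ Y) :=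
  List.isChain_append.mpr ⟨hX, hY, hj⟩

theorem NR_replicate {c : ℕ} {a : α} {b : Bool} : NR (List.replicate c (a, b)) :=
  NR_of_reduce_eq_self (FreeGroup.reduce_replicate c (a, b))

end Scratch

namespace Scratch
open FreeGroup List

variable {α : Type*} [DecidableEq α]

theorem LHS_notP {a : α} {N0 : ℕ} (hN0 : 1 ≤ N0) (s : FreeGroup α) (m : ℤ)
    (hslen : s.toWord.length ≤ N0 - 1) :
    ¬ Pp a N0 ((s * FreeGroup.of a ^ m).toWord) := by
  obtain ⟨Q, e, hxe, hQNR, hlenQ, hQlast⟩ := strip a s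
  obtain ⟨σ, hσ⟩ := toWord_zpow a (e + m)
  have hx : s * FreeGroup.of a ^ m = FreeGroup.mk (Q ++ List.replicate (e+m).natAbs (a, σ)) := by
    rw [hxe, mul_assoc, ← zpow_add, ← FreeGroup.mul_mk]
    congr 1
    rw [← hσ, FreeGroup.mk_toWord]
  have hNR : NR (Q ++ List.replicate (e+m).natAbs (a, σ)) := by
    refine NR_append hQNR NR_replicate ?_
    intro p hp q hq
    have hpa : p.1 ≠ a := hQlast p hp
    have hqa : q.1 = a := by
      have := List.mem_of_mem_head? hq
      exact (List.eq_of_mem_replicate this) ▸ rfl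
    exact fun hc => hpa (hc.1.trans hqa)
  rw [hx, toWord_mk_of_NR hNR]
  exact not_Pp_of_suffix_const rfl
    (fun p hp => (List.eq_of_mem_replicate hp) ▸ rfl)
    (by omega) hN0

theorem RHS_P {a : α} {N0 : ℕ} (hN0 : 1 ≤ N0) (s w : FreeGroup α) (m k : ℤ)
    (hslen : s.toWord.length ≤ N0 - 1) (hsnp : ∀ e : ℤ, s ≠ FreeGroup.of a ^ e)
    (hw1 : w ≠ 1)
    (hwh : ∀ p ∈ w.toWord.head?, p.1 ≠ a)
    (hwl : ∀ p ∈ w.toWord.getLast?, p.1 ≠ a)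
    (hm : 2 * (N0 : ℤ) - 1 ≤ |m|) (hk : 2 * (N0 : ℤ) - 1 ≤ |k|) :
    Pp a N0 ((s * (FreeGroup.of a ^ m * w * FreeGroup.of a ^ k)).toWord) := by
  obtain ⟨Q, e, hxe, hQNR, hlenQ, hQlast⟩ := strip a s
  have hQne : Q ≠ [] := by
    intro h
    rw [h, ← FreeGroup.one_eq_mk, one_mul] at hxe
    exact hsnp e hxe
  have hena : e.natAbs ≤ N0 - 1 := by omega
  have hmna : 2 * N0 - 1 ≤ m.natAbs := by
    rw [Int.abs_eq_natAbs] at hm; omega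
  have hkna : 2 * N0 - 1 ≤ k.natAbs := by
    rw [Int.abs_eq_natAbs] at hk; omega
  have hm' : N0 ≤ (e + m).natAbs := by omega
  obtain ⟨σ, hσ⟩ := toWord_zpow a (e + m)
  obtain ⟨τ, hτ⟩ := toWord_zpow a k
  set R2 := List.replicate (e+m).natAbs (a, σ) with hR2
  set R3 := List.replicate k.natAbs (a, τ) with hR3
  have hwW : w.toWord ≠ [] := fun h => hw1 (FreeGroup.toWord_eq_nil_iff.mp h)
  have hx : s * (FreeGroup.of a ^ m * w * FreeGroup.of a ^ k)
      = FreeGroup.mk (Q ++ (R2 ++ (w.toWord ++ R3))) := by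
    have e1 : s * (FreeGroup.of a ^ m * w * FreeGroup.of a ^ k)
        = FreeGroup.mk Q * (FreeGroup.of a ^ (e+m) * (w * FreeGroup.of a ^ k)) := by
      rw [hxe, zpow_add]; group
    have h2 : FreeGroup.of a ^ (e + m) = FreeGroup.mk R2 := by
      rw [← hσ, FreeGroup.mk_toWord]
    have h3 : FreeGroup.of a ^ k = FreeGroup.mk R3 := by
      rw [← hτ, FreeGroup.mk_toWord]
    have h4 : FreeGroup.mk (Q ++ (R2 ++ (w.toWord ++ R3)))
        = FreeGroup.mk Q * (FreeGroup.of a ^ (e + m) * (w * FreeGroup.of a ^ k)) := by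
      rw [← FreeGroup.mul_mk, ← FreeGroup.mul_mk, ← FreeGroup.mul_mk, FreeGroup.mk_toWord,
        ← h2, ← h3]
    rw [e1, h4]
  -- no-cancellation of the concatenation
  have hNR : NR (Q ++ (R2 ++ (w.toWord ++ R3))) := by
    refine NR_append hQNR ?_ ?_
    · refine NR_append NR_replicate ?_ ?_
      · refine NR_append (NR_toWord w) NR_replicate ?_
        intro p hp q hq
        have hpa : p.1 ≠ a := hwl p hp
        have hqa : q.1 = a :=
          (List.eq_of_mem_replicate (List.mem_of_mem_head? hq)) ▸ rfl
        exact fun hc => hpa (hc.1.trans hqa)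
      · intro p hp q hq
        have hpa : p.1 = a :=
          (List.eq_of_mem_replicate (List.mem_of_mem_getLast? hp)) ▸ rfl
        have hqa : q.1 ≠ a := by
          rw [List.head?_append_of_ne_nil _ hwW] at hq
          exact hwh q hq
        exact fun hc => hqa (hc.1.symm.trans hpa)
    · intro p hp q hq
      have hpa : p.1 ≠ a := hQlast p hp
      have hqa : q.1 = a := by
        have h1 : R2 ≠ [] := by
          rw [hR2]
          simp only [ne_eq, List.replicate_eq_nil_iff]
          omega
        rw [List.head?_append_of_ne_nil _ h1] at hq
        exact (List.eq_of_mem_replicate (List.mem_of_mem_head? hq)) ▸ rfl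
      exact fun hc => hpa (hc.1.trans hqa)
  rw [hx, toWord_mk_of_NR hNR]
  -- now exhibit the decomposition
  refine ⟨Q.dropLast, Q.getLast hQne, R2, w.toWord.head hwW, w.toWord.tail ++ R3, ?_, ?_, ?_, ?_, ?_⟩
  · rw [show w.toWord.head hwW :: (w.toWord.tail ++ R3) = w.toWord ++ R3 by
      rw [← List.cons_append, List.cons_head_tail]]
    rw [List.append_cons Q.dropLast, ← List.append_assoc, List.dropLast_concat_getLast hQne,
      List.append_assoc]
  · exact hQlast _ (List.getLast?_eq_getLast ..)
  · exact hwh _ (by simp [List.head?_eq_head hwW, Option.mem_def])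
  · intro x hx
    exact (List.eq_of_mem_replicate hx) ▸ rfl
  · simpa [hR2] using hm'

end Scratch

namespace Scratch
open FreeGroup List

variable {α : Type*} [DecidableEq α]

theorem inv_toWord_length (s : FreeGroup α) : (s⁻¹).toWord.length = s.toWord.length := by
  rw [FreeGroup.toWord_inv, FreeGroup.invRev_length]

theorem Pp_of_inv {a : α} {N0 : ℕ} {x : FreeGroup α} (h : Pp a N0 ((x⁻¹).toWord)) :
    Pp a N0 (x.toWord) := by
  have h2 := Pp_invRev h
  rwa [← FreeGroup.toWord_inv, inv_inv] at h2

theorem head?_inv {w : FreeGroup α} {p : α × Bool} (hp : p ∈ (w⁻¹).toWord.head?) :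
    ∃ q ∈ w.toWord.getLast?, q.1 = p.1 := by
  rw [FreeGroup.toWord_inv] at hp
  simp only [FreeGroup.invRev, List.head?_reverse, List.getLast?_map] at hp
  rw [Option.mem_map] at hp
  obtain ⟨q, hq, rfl⟩ := hp
  exact ⟨q, hq, rfl⟩

theorem getLast?_inv {w : FreeGroup α} {p : α × Bool} (hp : p ∈ (w⁻¹).toWord.getLast?) :
    ∃ q ∈ w.toWord.head?, q.1 = p.1 := by
  rw [FreeGroup.toWord_inv] at hp
  simp only [FreeGroup.invRev, List.getLast?_reverse, List.head?_map] at hp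
  rw [Option.mem_map] at hp
  obtain ⟨q, hq, rfl⟩ := hp
  exact ⟨q, hq, rfl⟩

theorem noP_left {a : α} {N0 : ℕ} (hN0 : 1 ≤ N0) (s : FreeGroup α) (m : ℤ)
    (hslen : s.toWord.length ≤ N0 - 1) :
    ¬ Pp a N0 ((FreeGroup.of a ^ m * s).toWord) := by
  intro h
  have h2 := Pp_invRev h
  rw [← FreeGroup.toWord_inv, mul_inv_rev, ← zpow_neg] at h2
  exact LHS_notP hN0 s⁻¹ (-m) (by rw [inv_toWord_length]; exact hslen) h2

theorem P_left {a : α} {N0 : ℕ} (hN0 : 1 ≤ N0) (s w : FreeGroup α) (m k : ℤ)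
    (hslen : s.toWord.length ≤ N0 - 1) (hsnp : ∀ e : ℤ, s ≠ FreeGroup.of a ^ e)
    (hw1 : w ≠ 1)
    (hwh : ∀ p ∈ w.toWord.head?, p.1 ≠ a)
    (hwl : ∀ p ∈ w.toWord.getLast?, p.1 ≠ a)
    (hm : 2 * (N0 : ℤ) - 1 ≤ |m|) (hk : 2 * (N0 : ℤ) - 1 ≤ |k|) :
    Pp a N0 ((FreeGroup.of a ^ m * w * FreeGroup.of a ^ k * s).toWord) := by
  have hsnp' : ∀ e : ℤ, s⁻¹ ≠ FreeGroup.of a ^ e := by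
    intro e he
    exact hsnp (-e) (by rw [← inv_inv s, he, ← zpow_neg])
  have h := RHS_P hN0 s⁻¹ w⁻¹ (-k) (-m)
    (by rw [inv_toWord_length]; exact hslen) hsnp'
    (by simpa using hw1)
    (fun p hp => by obtain ⟨q, hq, hq1⟩ := head?_inv hp; exact hq1 ▸ hwl q hq)
    (fun p hp => by obtain ⟨q, hq, hq1⟩ := getLast?_inv hp; exact hq1 ▸ hwh q hq)
    (by rwa [abs_neg]) (by rwa [abs_neg])
  have e1 : s⁻¹ * (FreeGroup.of a ^ (-k) * w⁻¹ * FreeGroup.of a ^ (-m))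
      = (FreeGroup.of a ^ m * w * FreeGroup.of a ^ k * s)⁻¹ := by
    simp [mul_inv_rev, zpow_neg, mul_assoc]
  rw [e1] at h
  exact Pp_of_inv h

end Scratch

open Scratch

/-- with G, H, Gᵢ, S₁, S as above one has
(S₁H) ∩ (S₁S) = ∅, (HS₁) ∩ (S₁S) = ∅, (HS₁) ∩ (SS₁) = ∅, (S₁H) ∩ (SS₁) = ∅. -/
theorem stmt_3 (N : ℕ) (n : Fin N → ℕ) (hn : ∀ i, 2 ≤ n i) (N0 : ℕ) (hN0 : 1 ≤ N0)
    (S1 : Set (∀ i, FreeGroup (Fin (n i)))) (hfin : S1.Finite)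
    (hdisj : ∀ s ∈ S1, s ∉ Hset N n hn ∧ ∀ i, s ∉ Giset N n hn i)
    (hlen : ∀ s ∈ S1, wordLen N n s ≤ N0 - 1) :
    (S1 * Hset N n hn) ∩ (S1 * Sset N n hn N0) = ∅ ∧
    (Hset N n hn * S1) ∩ (S1 * Sset N n hn N0) = ∅ ∧
    (Hset N n hn * S1) ∩ (Sset N n hn N0 * S1) = ∅ ∧
    (S1 * Hset N n hn) ∩ (Sset N n hn N0 * S1) = ∅ := by
  -- helper facts
  have getI : ∀ s ∈ S1, Nonempty (Fin N) := by
    intro s hs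
    by_contra hempty
    rw [not_nonempty_iff] at hempty
    exact (hdisj s hs).1 (fun i => hempty.elim i)
  have lenI : ∀ s ∈ S1, ∀ i : Fin N, (s i).toWord.length ≤ N0 - 1 := by
    intro s hs i
    refine le_trans ?_ (hlen s hs)
    exact Finset.single_le_sum (f := fun j => (s j).toWord.length)
      (fun j _ => Nat.zero_le _) (Finset.mem_univ i)
  have npI : ∀ s ∈ S1, ∀ i : Fin N, ∀ e : ℤ,
      s i ≠ (FreeGroup.of (⟨0, by have := hn i; omega⟩ : Fin (n i))) ^ e := by
    intro s hs i e he
    exact ((hdisj s hs).2 i) (by exact ⟨e, he⟩)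
  -- unpacking S-membership at a component
  have sI : ∀ z ∈ Sset N n hn N0, ∀ i : Fin N,
      ∃ (m k : ℤ) (wi : FreeGroup (Fin (n i))),
        z i = (FreeGroup.of (⟨0, by have := hn i; omega⟩ : Fin (n i))) ^ m * wi *
              (FreeGroup.of (⟨0, by have := hn i; omega⟩ : Fin (n i))) ^ k ∧
        wi ≠ 1 ∧
        (∀ p ∈ wi.toWord.head?, p.1 ≠ (⟨0, by have := hn i; omega⟩ : Fin (n i))) ∧
        (∀ p ∈ wi.toWord.getLast?, p.1 ≠ (⟨0, by have := hn i; omega⟩ : Fin (n i))) ∧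
        2 * (N0 : ℤ) - 1 ≤ |m| ∧ 2 * (N0 : ℤ) - 1 ≤ |k| := by
    intro z hz i
    obtain ⟨m, k, wi, h1, h2, h3, h4, h5, h6⟩ := hz i
    refine ⟨m, k, wi, h1, h2, ?_, ?_, h5, h6⟩
    · intro p hp hpa
      exact h3 ⟨p.2, by rw [Option.mem_def] at hp; rw [hp]; rw [← hpa]⟩
    · intro p hp hpa
      exact h4 ⟨p.2, by rw [Option.mem_def] at hp; rw [hp]; rw [← hpa]⟩
  refine ⟨?_, ?_, ?_, ?_⟩
  -- case 1 : (S1 H) ∩ (S1 S)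
  · rw [Set.eq_empty_iff_forall_notMem]
    rintro x ⟨hx1, hx2⟩
    obtain ⟨s, hs, h, hh, heq1⟩ := Set.mem_mul.mp hx1
    obtain ⟨s', hs', z, hz, heq2⟩ := Set.mem_mul.mp hx2
    obtain ⟨i⟩ := getI s hs
    obtain ⟨mh, hmh⟩ := hh i
    obtain ⟨m, k, wi, h1, h2, h3, h4, h5, h6⟩ := sI z hz i
    have eL : s i * h i = x i := by rw [← heq1]; rfl
    have eR : s' i * z i = x i := by rw [← heq2]; rfl
    have hnp := LHS_notP (a := (⟨0, by have := hn i; omega⟩ : Fin (n i))) hN0 (s i) mh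
      (lenI s hs i)
    rw [← hmh, eL] at hnp
    have hp := RHS_P hN0 (s' i) wi m k (lenI s' hs' i) (npI s' hs' i) h2 h3 h4 h5 h6
    rw [← h1, eR] at hp
    exact hnp hp
  -- case 2 : (H S1) ∩ (S1 S)
  · rw [Set.eq_empty_iff_forall_notMem]
    rintro x ⟨hx1, hx2⟩
    obtain ⟨h, hh, s, hs, heq1⟩ := Set.mem_mul.mp hx1
    obtain ⟨s', hs', z, hz, heq2⟩ := Set.mem_mul.mp hx2
    obtain ⟨i⟩ := getI s hs
    obtain ⟨mh, hmh⟩ := hh i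
    obtain ⟨m, k, wi, h1, h2, h3, h4, h5, h6⟩ := sI z hz i
    have eL : h i * s i = x i := by rw [← heq1]; rfl
    have eR : s' i * z i = x i := by rw [← heq2]; rfl
    have hnp := noP_left (a := (⟨0, by have := hn i; omega⟩ : Fin (n i))) hN0 (s i) mh
      (lenI s hs i)
    rw [← hmh, eL] at hnp
    have hp := RHS_P hN0 (s' i) wi m k (lenI s' hs' i) (npI s' hs' i) h2 h3 h4 h5 h6
    rw [← h1, eR] at hp
    exact hnp hp
  -- case 3 : (H S1) ∩ (S S1)
  · rw [Set.eq_empty_iff_forall_notMem]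
    rintro x ⟨hx1, hx2⟩
    obtain ⟨h, hh, s, hs, heq1⟩ := Set.mem_mul.mp hx1
    obtain ⟨z, hz, s', hs', heq2⟩ := Set.mem_mul.mp hx2
    obtain ⟨i⟩ := getI s hs
    obtain ⟨mh, hmh⟩ := hh i
    obtain ⟨m, k, wi, h1, h2, h3, h4, h5, h6⟩ := sI z hz i
    have eL : h i * s i = x i := by rw [← heq1]; rfl
    have eR : z i * s' i = x i := by rw [← heq2]; rfl
    have hnp := noP_left (a := (⟨0, by have := hn i; omega⟩ : Fin (n i))) hN0 (s i) mh
      (lenI s hs i)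
    rw [← hmh, eL] at hnp
    have hp := P_left hN0 (s' i) wi m k (lenI s' hs' i) (npI s' hs' i) h2 h3 h4 h5 h6
    rw [← h1, eR] at hp
    exact hnp hp
  -- case 4 : (S1 H) ∩ (S S1)
  · rw [Set.eq_empty_iff_forall_notMem]
    rintro x ⟨hx1, hx2⟩
    obtain ⟨s, hs, h, hh, heq1⟩ := Set.mem_mul.mp hx1
    obtain ⟨z, hz, s', hs', heq2⟩ := Set.mem_mul.mp hx2
    obtain ⟨i⟩ := getI s hs
    obtain ⟨mh, hmh⟩ := hh i
    obtain ⟨m, k, wi, h1, h2, h3, h4, h5, h6⟩ := sI z hz i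
    have eL : s i * h i = x i := by rw [← heq1]; rfl
    have eR : z i * s' i = x i := by rw [← heq2]; rfl
    have hnp := LHS_notP (a := (⟨0, by have := hn i; omega⟩ : Fin (n i))) hN0 (s i) mh
      (lenI s hs i)
    rw [← hmh, eL] at hnp
    have hp := P_left hN0 (s' i) wi m k (lenI s' hs' i) (npI s' hs' i) h2 h3 h4 h5 h6
    rw [← h1, eR] at hp
    exact hnp hp
end

section
/- Let G = F(n_1) × ⋯ × F(n_N) with n_i ≥ 2, H = ⟨g_{1,1}⟩ × ⋯ × ⟨g_{N,1}⟩, and G_i as above. For any g ∈ G not lying in ⋃_{i=1}^N G_i, the subgroups g H g^{-1} and H intersect trivially; equivalently, for all h, h' ∈ H, g h g^{-1} = h' implies h = h' = e. -/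
namespace FreeGroupAux

open FreeGroup List

variable {α : Type*} [DecidableEq α]

/-- Non-cancellation relation between adjacent letters. -/
def P (p q : α × Bool) : Prop := ¬(p.1 = q.1 ∧ p.2 = !q.2)

theorem chain'_reduce (L : List (α × Bool)) : List.Chain' P (FreeGroup.reduce L) := by
  induction L with
  | nil => exact List.isChain_nil
  | cons x L ih =>
    rw [FreeGroup.reduce.cons]
    cases hr : FreeGroup.reduce L with
    | nil => exact List.isChain_singleton _
    | cons hd tl =>
      rw [hr] at ih
      show List.Chain' P (if x.1 = hd.1 ∧ x.2 = !hd.2 then tl else x :: hd :: tl)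
      split
      · exact ih.tail
      · exact List.isChain_cons_cons.mpr ⟨by assumption, ih⟩

theorem reduce_eq_self (L : List (α × Bool)) (h : List.Chain' P L) :
    FreeGroup.reduce L = L := by
  induction L with
  | nil => rfl
  | cons x L ih =>
    rw [FreeGroup.reduce.cons]
    cases L with
    | nil => rfl
    | cons y T =>
      rw [ih h.tail]
      unfold List.Chain' at h; rw [List.isChain_cons_cons] at h
      show (if x.1 = y.1 ∧ x.2 = !y.2 then T else x :: y :: T) = x :: y :: T
      simp only [if_neg h.1]

theorem chain'_toWord (x : FreeGroup α) : List.Chain' P x.toWord := by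
  rw [← FreeGroup.reduce_toWord]
  exact chain'_reduce _

theorem comm_replicate {c : α × Bool} :
    ∀ (L : List (α × Bool)) (m : ℕ), 0 < m →
      L ++ List.replicate m c = List.replicate m c ++ L →
      L = List.replicate L.length c := by
  intro L
  induction L with
  | nil => simp
  | cons x T ih =>
    intro m hm h
    obtain ⟨m', rfl⟩ : ∃ m', m = m' + 1 := ⟨m - 1, by omega⟩
    rw [List.replicate_succ, List.cons_append, List.cons_append] at h
    injection h with h1 h2
    subst h1
    have h2' : T ++ List.replicate (m' + 1) x = List.replicate (m' + 1) x ++ T := by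
      rw [List.replicate_succ, h2,
        show x :: List.replicate m' x = List.replicate m' x ++ [x] by
          rw [← List.replicate_succ, List.replicate_succ'],
        List.append_assoc, List.singleton_append]
    have hT := ih (m' + 1) (Nat.succ_pos _) h2'
    simp [List.replicate_succ, ← hT]

theorem toWord_mul (x y : FreeGroup α) :
    (x * y).toWord = FreeGroup.reduce (x.toWord ++ y.toWord) := by
  have : x * y = FreeGroup.mk (x.toWord ++ y.toWord) := by
    rw [← FreeGroup.mul_mk, FreeGroup.mk_toWord, FreeGroup.mk_toWord]
  rw [this, FreeGroup.toWord_mk]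

theorem of_eq_mk (a : α) : FreeGroup.of a = FreeGroup.mk [(a, true)] := rfl

theorem inv_of_eq_mk (a : α) : (FreeGroup.of a)⁻¹ = FreeGroup.mk [(a, false)] := by
  rw [of_eq_mk, FreeGroup.inv_mk]
  simp [FreeGroup.invRev]

theorem mk_cons (p : α × Bool) (T : List (α × Bool)) :
    FreeGroup.mk (p :: T) = FreeGroup.mk [p] * FreeGroup.mk T := by
  rw [FreeGroup.mul_mk]; rfl

theorem key (a : α) (m : ℕ) (hm : 0 < m) :
    ∀ k (x : FreeGroup α), x.toWord.length ≤ k →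
      x * FreeGroup.of a ^ m = FreeGroup.of a ^ m * x →
      ∃ j : ℤ, x = FreeGroup.of a ^ j := by
  intro k
  induction k with
  | zero =>
    intro x hx _
    refine ⟨0, ?_⟩
    have : x.toWord = [] := List.length_eq_zero_iff.mp (Nat.le_zero.mp hx)
    rw [FreeGroup.toWord_eq_nil_iff.mp this, zpow_zero]
  | succ k ih =>
    intro x hx hcomm
    cases hL : x.toWord with
    | nil =>
      exact ⟨0, by rw [FreeGroup.toWord_eq_nil_iff.mp hL, zpow_zero]⟩
    | cons p T =>
      have hchain : List.Chain' P (p :: T) := hL ▸ chain'_toWord x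
      have hlenx : T.length + 1 ≤ k + 1 := by
        have := hx; rw [hL] at this; simpa using this
      by_cases hp : p = (a, false)
      · -- x = (of a)⁻¹ * mk T
        have hx' : FreeGroup.of a * x = FreeGroup.mk T := by
          conv_lhs => rw [← FreeGroup.mk_toWord (x := x)]
          rw [hL, hp, mk_cons, ← inv_of_eq_mk, ← mul_assoc, mul_inv_cancel, one_mul]
        have hTword : (FreeGroup.mk T).toWord = T := by
          rw [FreeGroup.toWord_mk, reduce_eq_self T hchain.tail]
        have hlen : (FreeGroup.mk T).toWord.length ≤ k := by
          rw [hTword]; omega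
        have hcomm' : FreeGroup.mk T * FreeGroup.of a ^ m
            = FreeGroup.of a ^ m * FreeGroup.mk T := by
          rw [← hx', mul_assoc, hcomm, ← mul_assoc, ← mul_assoc,
            Commute.self_pow (FreeGroup.of a) m]
        obtain ⟨j, hj⟩ := ih (FreeGroup.mk T) hlen hcomm'
        refine ⟨j - 1, ?_⟩
        have hxeq : x = (FreeGroup.of a)⁻¹ * FreeGroup.mk T := by
          rw [← hx', ← mul_assoc, inv_mul_cancel, one_mul]
        rw [hxeq, hj, sub_eq_add_neg, add_comm, zpow_add, zpow_neg, zpow_one]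
      · by_cases hq : (p :: T).getLast (List.cons_ne_nil p T) = (a, false)
        · have hne : (p :: T) ≠ [] := List.cons_ne_nil p T
          obtain ⟨D, hD⟩ : ∃ D, (p :: T).dropLast = D := ⟨_, rfl⟩
          have hsplit : D ++ [(a, false)] = p :: T := by
            rw [← hD, ← hq, List.dropLast_append_getLast]
          have hx' : x * FreeGroup.of a = FreeGroup.mk D := by
            conv_lhs => rw [← FreeGroup.mk_toWord (x := x)]
            rw [hL, ← hsplit, of_eq_mk, ← FreeGroup.mul_mk, mul_assoc,
              show FreeGroup.mk [((a : α), false)] * FreeGroup.mk [(a, true)] = 1 by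
                rw [← inv_of_eq_mk, ← of_eq_mk, inv_mul_cancel],
              mul_one]
          have hDchain : List.Chain' P D :=
            hD ▸ hchain.prefix (List.dropLast_prefix _)
          have hDword : (FreeGroup.mk D).toWord = D := by
            rw [FreeGroup.toWord_mk, reduce_eq_self _ hDchain]
          have hDlen : D.length = T.length := by
            rw [← hD, List.length_dropLast, List.length_cons]; omega
          have hlen : (FreeGroup.mk D).toWord.length ≤ k := by
            rw [hDword, hDlen]; omega
          have hcomm' : FreeGroup.mk D * FreeGroup.of a ^ m
              = FreeGroup.of a ^ m * FreeGroup.mk D := by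
            rw [← hx', mul_assoc, Commute.self_pow (FreeGroup.of a) m,
              ← mul_assoc, hcomm, mul_assoc]
          obtain ⟨j, hj⟩ := ih (FreeGroup.mk D) hlen hcomm'
          refine ⟨j - 1, ?_⟩
          have hxeq : x = FreeGroup.mk D * (FreeGroup.of a)⁻¹ := by
            rw [← hx', mul_assoc, mul_inv_cancel, mul_one]
          rw [hxeq, hj, sub_eq_add_neg, zpow_add, zpow_neg, zpow_one]
        · -- no cancellation: L ++ W = W ++ L
          have hWword : (FreeGroup.of a ^ m).toWord
              = List.replicate m ((a, true) : α × Bool) := FreeGroup.toWord_of_pow a m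
          have hWchain : List.Chain' P (List.replicate m ((a, true) : α × Bool)) := by
            rw [← FreeGroup.reduce_replicate]
            exact chain'_reduce _
          have h1 : (x * FreeGroup.of a ^ m).toWord
              = (p :: T) ++ List.replicate m ((a, true) : α × Bool) := by
            rw [toWord_mul, hL, hWword]
            apply reduce_eq_self
            apply hchain.append hWchain
            intro u hu v hv
            rw [List.getLast?_eq_getLast (List.cons_ne_nil p T),
              Option.mem_some_iff] at hu
            obtain ⟨m', rfl⟩ : ∃ m', m = m' + 1 := ⟨m - 1, by omega⟩
            rw [List.replicate_succ, List.head?_cons, Option.mem_some_iff] at hv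
            subst hu; subst hv
            rintro ⟨e1, e2⟩
            exact hq (Prod.ext e1 (by simpa using e2))
          have h2 : (FreeGroup.of a ^ m * x).toWord
              = List.replicate m ((a, true) : α × Bool) ++ (p :: T) := by
            rw [toWord_mul, hL, hWword]
            apply reduce_eq_self
            apply hWchain.append hchain
            intro u hu v hv
            obtain ⟨m', rfl⟩ : ∃ m', m = m' + 1 := ⟨m - 1, by omega⟩
            rw [List.replicate_succ', List.getLast?_concat, Option.mem_some_iff] at hu
            rw [List.head?_cons, Option.mem_some_iff] at hv
            subst hu; subst hv
            rintro ⟨e1, e2⟩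
            exact hp (Prod.ext e1.symm (by simpa using e2.symm))
          have heq : (p :: T) ++ List.replicate m ((a, true) : α × Bool)
              = List.replicate m ((a, true) : α × Bool) ++ (p :: T) := by
            rw [← h1, ← h2, hcomm]
          have hrep := comm_replicate (p :: T) m hm heq
          refine ⟨((p :: T).length : ℤ), ?_⟩
          apply FreeGroup.toWord_injective
          rw [hL, hrep, zpow_natCast, FreeGroup.toWord_of_pow]
          simp

theorem keyZ (a : α) (m : ℤ) (hm : m ≠ 0) (x : FreeGroup α)
    (h : x * FreeGroup.of a ^ m = FreeGroup.of a ^ m * x) :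
    ∃ j : ℤ, x = FreeGroup.of a ^ j := by
  have main : ∀ m' : ℤ, 0 < m' →
      x * FreeGroup.of a ^ m' = FreeGroup.of a ^ m' * x →
      ∃ j : ℤ, x = FreeGroup.of a ^ j := by
    intro m' hm' hc
    have e : FreeGroup.of a ^ m' = FreeGroup.of a ^ m'.toNat := by
      rw [← zpow_natCast, Int.toNat_of_nonneg hm'.le]
    exact key a m'.toNat (by omega) x.toWord.length x le_rfl (by rw [← e]; exact hc)
  rcases hm.lt_or_gt with hlt | hlt
  · refine main (-m) (by omega) ?_
    have hc : Commute x (FreeGroup.of a ^ m) := h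
    have := hc.inv_right
    rw [← zpow_neg] at this
    exact this
  · exact main m hlt h

/-- Total-exponent homomorphism. -/
def eHom (α : Type*) : FreeGroup α →* Multiplicative ℤ :=
  FreeGroup.lift fun _ => Multiplicative.ofAdd 1

theorem eHom_zpow (a : α) (m : ℤ) :
    eHom α (FreeGroup.of a ^ m) = Multiplicative.ofAdd m := by
  rw [map_zpow, eHom, FreeGroup.lift_apply_of, ← ofAdd_zsmul, smul_eq_mul, mul_one]

theorem conj_pow_eq (a : α) (u : FreeGroup α) {m k : ℤ}
    (h : u * FreeGroup.of a ^ m * u⁻¹ = FreeGroup.of a ^ k) : m = k := by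
  have h0 := congrArg (eHom α) h
  rw [MonoidHom.map_mul, MonoidHom.map_mul, MonoidHom.map_inv, eHom_zpow, eHom_zpow] at h0
  have h2 : Multiplicative.ofAdd m = Multiplicative.ofAdd k := by
    rw [← h0, mul_comm, ← mul_assoc, inv_mul_cancel, one_mul]
  exact Multiplicative.ofAdd.injective h2

end FreeGroupAux

/-- if g ∈ G = F(n_1) × ⋯ × F(n_N) does not lie in ⋃ᵢ Gᵢ, then
gHg⁻¹ ∩ H = {e}: for all h, h' ∈ H, g h g⁻¹ = h' implies h = h' = e. -/
theorem stmt_7 (N : ℕ) (n : Fin N → ℕ) (hn : ∀ i, 2 ≤ n i)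
    (g : ∀ i, FreeGroup (Fin (n i))) (hg : ∀ i, g ∉ Giset N n hn i) :
    ∀ h ∈ Hset N n hn, ∀ h' ∈ Hset N n hn,
      g * h * g⁻¹ = h' → h = 1 ∧ h' = 1 := by
  intro h hh h' hh' heq
  have key0 : ∀ i, h i = 1 := by
    intro i
    obtain ⟨m, hm⟩ := hh i
    obtain ⟨k, hk⟩ := hh' i
    set a : Fin (n i) := ⟨0, by have := hn i; omega⟩ with ha
    have hci : g i * FreeGroup.of a ^ m * (g i)⁻¹ = FreeGroup.of a ^ k := by
      have := congrFun heq i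
      simp only [Pi.mul_apply, Pi.inv_apply] at this
      rw [hm, hk] at this
      exact this
    have hmk : m = k := FreeGroupAux.conj_pow_eq a (g i) hci
    by_contra hne
    have hm0 : m ≠ 0 := by
      rintro rfl
      exact hne (by rw [hm, zpow_zero])
    have hcomm : g i * FreeGroup.of a ^ m = FreeGroup.of a ^ m * g i := by
      subst hmk
      calc g i * FreeGroup.of a ^ m
          = g i * FreeGroup.of a ^ m * (g i)⁻¹ * g i := by group
        _ = FreeGroup.of a ^ m * g i := by rw [hci]
    obtain ⟨j, hj⟩ := FreeGroupAux.keyZ a m hm0 (g i) hcomm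
    exact hg i ⟨j, hj⟩
  have h1 : h = 1 := funext fun i => key0 i
  refine ⟨h1, ?_⟩
  rw [← heq, h1, mul_one, mul_inv_cancel]
end
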